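/- Let (X, Y, A) be jointly distributed with Y, A ∈ {0,1}, and let Ŷ = h(f(X)) ∈ {0,1} for a feature map f and classifier h. For each a ∈ {0,1}, let D_a^Y be the conditional distribution of Y given A = a and D_a^{h∘f} the conditional distribution of Ŷ given A = a. Then d_JS(D_a^Y, D_a^{h∘f}) ≤ √(Err_a(h ∘ f)), where Err_a(h ∘ f) := E[ |Y − h(f(X))| | A = a ]. -/

import Mathlib

open MeasureTheory ProbabilityTheory
open scoped ENNReal

lemma key_nats {p q : ℝ} (hq : 0 < q) (hqp : q ≤ p) :
    p * Real.log p + q * Real.log q + 2 * q * Real.log 2 ≤ (p + q) * Real.log (p + q) := by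
  have hp : 0 < p := lt_of_lt_of_le hq hqp
  set F : ℝ → ℝ := fun x => (p + x) * Real.log (p + x) - p * Real.log p - x * Real.log x
    - 2 * x * Real.log 2 with hF
  have hF0 : F 0 = 0 := by simp [hF]
  have hFp : F p = 0 := by
    have h2 : Real.log (p + p) = Real.log 2 + Real.log p := by
      rw [show p + p = 2 * p by ring, Real.log_mul (by norm_num) hp.ne']
    simp only [hF, h2]; ring
  have h1 : Continuous fun x : ℝ => (p + x) * Real.log (p + x) :=
    Real.continuous_mul_log.comp (continuous_const.add continuous_id)
  have hcont : Continuous F := by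
    show Continuous fun x : ℝ => (p + x) * Real.log (p + x) - p * Real.log p - x * Real.log x - 2 * x * Real.log 2
    exact ((h1.sub continuous_const).sub Real.continuous_mul_log).sub (by continuity)
  have hderiv : ∀ x : ℝ, 0 < x → HasDerivAt F
      (Real.log (p + x) - Real.log x - 2 * Real.log 2) x := by
    intro x hx
    have hpx : (0:ℝ) < p + x := by linarith
    have d1 : HasDerivAt (fun x : ℝ => (p + x) * Real.log (p + x))
        ((Real.log (p + x) + 1) * 1) x :=
      (Real.hasDerivAt_mul_log hpx.ne').comp x ((hasDerivAt_id x).const_add p)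
    have d2 : HasDerivAt (fun x : ℝ => x * Real.log x) (Real.log x + 1) x :=
      Real.hasDerivAt_mul_log hx.ne'
    have d3 : HasDerivAt (fun x : ℝ => 2 * x * Real.log 2) (2 * Real.log 2) x := by
      simpa using ((hasDerivAt_id x).const_mul 2).mul_const (Real.log 2)
    have := (((d1.sub (hasDerivAt_const x (p * Real.log p))).sub d2).sub d3)
    exact this.congr_deriv (by ring)
  -- monotone on [0, p/3], antitone on [p/3, p]
  have hmono : MonotoneOn F (Set.Icc 0 (p/3)) := by
    apply monotoneOn_of_deriv_nonneg (convex_Icc _ _) hcont.continuousOn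
    · intro x hx
      rw [interior_Icc] at hx
      exact ((hderiv x hx.1).differentiableAt.differentiableWithinAt)
    · intro x hx
      rw [interior_Icc] at hx
      rw [(hderiv x hx.1).deriv]
      have h4 : Real.log (4 * x) = 2 * Real.log 2 + Real.log x := by
        rw [show (4:ℝ) * x = 2 * (2 * x) by ring,
          Real.log_mul (by norm_num) (mul_ne_zero two_ne_zero hx.1.ne'),
          Real.log_mul (by norm_num) hx.1.ne']
        ring
      have hle : Real.log (4 * x) ≤ Real.log (p + x) :=
        Real.log_le_log (by linarith [hx.1]) (by nlinarith [hx.2])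
      linarith [h4 ▸ hle]
  have hanti : AntitoneOn F (Set.Icc (p/3) p) := by
    apply antitoneOn_of_deriv_nonpos (convex_Icc _ _) hcont.continuousOn
    · intro x hx
      rw [interior_Icc] at hx
      have : 0 < x := lt_of_le_of_lt (by positivity) hx.1
      exact ((hderiv x this).differentiableAt.differentiableWithinAt)
    · intro x hx
      rw [interior_Icc] at hx
      have hx0 : 0 < x := lt_of_le_of_lt (by positivity) hx.1
      rw [(hderiv x hx0).deriv]
      have h4 : Real.log (4 * x) = 2 * Real.log 2 + Real.log x := by
        rw [show (4:ℝ) * x = 2 * (2 * x) by ring,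
          Real.log_mul (by norm_num) (mul_ne_zero two_ne_zero hx0.ne'),
          Real.log_mul (by norm_num) hx0.ne']
        ring
      have hle : Real.log (p + x) ≤ Real.log (4 * x) :=
        Real.log_le_log (by positivity) (by nlinarith [hx.1])
      linarith [h4 ▸ hle]
  have hFq : 0 ≤ F q := by
    rcases le_total q (p/3) with hc | hc
    · have := hmono (Set.mem_Icc.2 ⟨le_refl 0, by positivity⟩) (Set.mem_Icc.2 ⟨hq.le, hc⟩) hq.le
      rw [hF0] at this; exact this
    · have := hanti (Set.mem_Icc.2 ⟨hc, hqp⟩) (Set.mem_Icc.2 ⟨by linarith, le_refl p⟩) hqp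
      rw [hFp] at this; exact this
  simp only [hF] at hFq
  linarith

lemma key_atom_le {p q : ℝ} (hq : 0 ≤ q) (hqp : q ≤ p) :
    p * Real.logb 2 (p / ((p + q) / 2)) + q * Real.logb 2 (q / ((p + q) / 2)) ≤ p - q := by
  rcases eq_or_lt_of_le hq with h0 | h0
  · -- q = 0
    rcases h0.symm ▸ (rfl : (0:ℝ) = 0) with _
    have hq0 : q = 0 := h0.symm
    subst hq0
    rcases eq_or_lt_of_le (le_trans hq hqp) with hp0 | hp0
    · simp [← hp0]
    · have : p / ((p + 0) / 2) = 2 := by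
        field_simp
        ring
      rw [this]
      simp [Real.logb_self_eq_one one_lt_two]
  · have hp : 0 < p := lt_of_lt_of_le h0 hqp
    have hm : (0:ℝ) < (p + q) / 2 := by linarith
    have hpq : (0:ℝ) < p + q := by linarith
    have hlog2 : 0 < Real.log 2 := Real.log_pos one_lt_two
    have e1 : Real.logb 2 (p / ((p + q) / 2))
        = (Real.log p - Real.log (p + q) + Real.log 2) / Real.log 2 := by
      rw [Real.logb, Real.log_div hp.ne' hm.ne', Real.log_div hpq.ne' two_ne_zero]
      ring
    have e2 : Real.logb 2 (q / ((p + q) / 2))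
        = (Real.log q - Real.log (p + q) + Real.log 2) / Real.log 2 := by
      rw [Real.logb, Real.log_div h0.ne' hm.ne', Real.log_div hpq.ne' two_ne_zero]
      ring
    rw [e1, e2]
    have key := key_nats h0 hqp
    rw [show p * ((Real.log p - Real.log (p + q) + Real.log 2) / Real.log 2)
        + q * ((Real.log q - Real.log (p + q) + Real.log 2) / Real.log 2)
        = (p * Real.log p + q * Real.log q - (p + q) * Real.log (p + q)
          + (p + q) * Real.log 2) / Real.log 2 by ring]
    rw [div_le_iff₀ hlog2]
    nlinarith [key]

lemma key_atom {p q : ℝ} (hp : 0 ≤ p) (hq : 0 ≤ q) :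
    p * Real.logb 2 (p / ((p + q) / 2)) + q * Real.logb 2 (q / ((p + q) / 2)) ≤ |p - q| := by
  rcases le_total q p with hc | hc
  · rw [abs_of_nonneg (by linarith)]; exact key_atom_le hq hc
  · rw [abs_sub_comm, abs_of_nonneg (by linarith)]
    have h2 := key_atom_le hp hc
    rw [add_comm q p] at h2
    linarith

/-- Kullback–Leibler divergence (base-2 logarithm) between two mass functions,
with the usual conventions `0 log 0 = 0`. -/
noncomputable def klFun {α : Type*} (P Q : α → ℝ≥0∞) : ℝ :=
  ∑' a, (P a).toReal * Real.logb 2 ((P a).toReal / (Q a).toReal)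

/-- Jensen–Shannon divergence (base-2 logarithm):
`D_JS(P, Q) = (1/2) D_KL(P ‖ M) + (1/2) D_KL(Q ‖ M)` where `M = (P + Q)/2`. -/
noncomputable def jsFun {α : Type*} (P Q : α → ℝ≥0∞) : ℝ :=
  (klFun P (fun a => (P a + Q a) / 2) + klFun Q (fun a => (P a + Q a) / 2)) / 2

/-- for each `a ∈ {0,1}`, the JS distance between the conditional
distribution `D_a^Y` of `Y` given `A = a` and the conditional distribution
`D_a^{h∘f}` of `Ŷ = h(f(X))` given `A = a` satisfies
`d_JS(D_a^Y, D_a^{h∘f}) ≤ √(Err_a(h ∘ f))`, where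
`Err_a(h ∘ f) = E[|Y - h(f(X))| | A = a]`. -/
theorem jsDist_le_sqrt_err
    {Ω 𝒳 𝒵 : Type*} [MeasurableSpace Ω]
    (μ : Measure Ω) [IsProbabilityMeasure μ]
    (X : Ω → 𝒳) (Y A : Ω → Bool) (f : 𝒳 → 𝒵) (h : 𝒵 → Bool)
    (hY : Measurable Y) (hA : Measurable A)
    (hhfX : Measurable (fun ω => h (f (X ω))))
    (hA0 : μ {ω | A ω = false} ≠ 0) (hA1 : μ {ω | A ω = true} ≠ 0) :
    ∀ a : Bool,
      Real.sqrt (jsFun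
          (fun b => (ProbabilityTheory.cond μ {ω | A ω = a}) {ω | Y ω = b})
          (fun b => (ProbabilityTheory.cond μ {ω | A ω = a}) {ω | h (f (X ω)) = b}))
        ≤ Real.sqrt (∫ ω, |(if Y ω then (1:ℝ) else 0) -
            (if h (f (X ω)) then (1:ℝ) else 0)| ∂(ProbabilityTheory.cond μ {ω' | A ω' = a})) := by
  intro a
  set ν := ProbabilityTheory.cond μ {ω | A ω = a} with hν
  have hs0 : μ {ω | A ω = a} ≠ 0 := by
    cases a
    · exact hA0
    · exact hA1
  haveI hprob : IsProbabilityMeasure ν := cond_isProbabilityMeasure hs0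
  apply Real.sqrt_le_sqrt
  -- measurable sets
  have hYm : ∀ b : Bool, MeasurableSet {ω | Y ω = b} := fun b =>
    hY (measurableSet_singleton b)
  have hQm : ∀ b : Bool, MeasurableSet {ω | h (f (X ω)) = b} := fun b =>
    hhfX (measurableSet_singleton b)
  set P : Bool → ℝ≥0∞ := fun b => ν {ω | Y ω = b} with hP
  set Q : Bool → ℝ≥0∞ := fun b => ν {ω | h (f (X ω)) = b} with hQ
  have hPfin : ∀ b, P b ≠ ∞ := fun b => measure_ne_top ν _
  have hQfin : ∀ b, Q b ≠ ∞ := fun b => measure_ne_top ν _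
  set pt := (P true).toReal with hpt
  set pf := (P false).toReal with hpf
  set qt := (Q true).toReal with hqt
  set qf := (Q false).toReal with hqf
  have hptnn : 0 ≤ pt := ENNReal.toReal_nonneg
  have hpfnn : 0 ≤ pf := ENNReal.toReal_nonneg
  have hqtnn : 0 ≤ qt := ENNReal.toReal_nonneg
  have hqfnn : 0 ≤ qf := ENNReal.toReal_nonneg
  -- sums equal 1
  have hPsum : pf + pt = 1 := by
    have hdisj : Disjoint {ω | Y ω = false} {ω | Y ω = true} := by
      rw [Set.disjoint_left]; intro ω h1 h2; simp_all
    have hunion : {ω | Y ω = false} ∪ {ω | Y ω = true} = Set.univ := by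
      ext ω; cases hb : Y ω <;> simp [hb]
    have := measure_union (μ := ν) hdisj (hYm true)
    rw [hunion, measure_univ] at this
    rw [hpf, hpt, hP, ← ENNReal.toReal_add (measure_ne_top _ _) (measure_ne_top _ _), ← this]
    simp
  have hQsum : qf + qt = 1 := by
    have hdisj : Disjoint {ω | h (f (X ω)) = false} {ω | h (f (X ω)) = true} := by
      rw [Set.disjoint_left]; intro ω h1 h2; simp_all
    have hunion : {ω | h (f (X ω)) = false} ∪ {ω | h (f (X ω)) = true} = Set.univ := by
      ext ω; cases hb : h (f (X ω)) <;> simp [hb]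
    have := measure_union (μ := ν) hdisj (hQm true)
    rw [hunion, measure_univ] at this
    rw [hqf, hqt, hQ, ← ENNReal.toReal_add (measure_ne_top _ _) (measure_ne_top _ _), ← this]
    simp
  -- compute jsFun
  have hM : ∀ b, (((P b + Q b) / 2 : ℝ≥0∞)).toReal = ((P b).toReal + (Q b).toReal) / 2 := by
    intro b
    rw [ENNReal.toReal_div, ENNReal.toReal_add (hPfin b) (hQfin b)]
    norm_num
  have hjs : jsFun P Q ≤ |pt - qt| := by
    have hexp : jsFun P Q =
        (pf * Real.logb 2 (pf / ((pf + qf) / 2)) + qf * Real.logb 2 (qf / ((pf + qf) / 2))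
          + (pt * Real.logb 2 (pt / ((pt + qt) / 2))
             + qt * Real.logb 2 (qt / ((pt + qt) / 2)))) / 2 := by
      simp only [jsFun, klFun, tsum_fintype, Fintype.sum_bool, hM]
      ring
    rw [hexp]
    have h1 := key_atom hpfnn hqfnn
    have h2 := key_atom hptnn hqtnn
    have habs : |pf - qf| = |pt - qt| := by
      rw [show pf - qf = -(pt - qt) by linarith, abs_neg]
    calc (pf * Real.logb 2 (pf / ((pf + qf) / 2)) + qf * Real.logb 2 (qf / ((pf + qf) / 2))
          + (pt * Real.logb 2 (pt / ((pt + qt) / 2))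
             + qt * Real.logb 2 (qt / ((pt + qt) / 2)))) / 2
        ≤ (|pf - qf| + |pt - qt|) / 2 := by linarith
      _ = |pt - qt| := by rw [habs]; ring
  refine hjs.trans ?_
  -- integral side
  have hf1 : (fun ω => if Y ω then (1:ℝ) else 0)
      = Set.indicator {ω | Y ω = true} (fun _ => (1:ℝ)) := by
    funext ω; by_cases hb : Y ω <;> simp [Set.indicator, hb]
  have hf2 : (fun ω => if h (f (X ω)) then (1:ℝ) else 0)
      = Set.indicator {ω | h (f (X ω)) = true} (fun _ => (1:ℝ)) := by
    funext ω; by_cases hb : h (f (X ω)) <;> simp [Set.indicator, hb]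
  have hint1 : Integrable (fun ω => if Y ω then (1:ℝ) else 0) ν := by
    rw [hf1]; exact (integrable_const (1:ℝ)).indicator (hYm true)
  have hint2 : Integrable (fun ω => if h (f (X ω)) then (1:ℝ) else 0) ν := by
    rw [hf2]; exact (integrable_const (1:ℝ)).indicator (hQm true)
  have hI1 : ∫ ω, (if Y ω then (1:ℝ) else 0) ∂ν = pt := by
    rw [hf1, integral_indicator_const (1:ℝ) (hYm true)]
    simp [hpt, hP, Measure.real]
  have hI2 : ∫ ω, (if h (f (X ω)) then (1:ℝ) else 0) ∂ν = qt := by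
    rw [hf2, integral_indicator_const (1:ℝ) (hQm true)]
    simp [hqt, hQ, Measure.real]
  calc |pt - qt|
      = |∫ ω, ((if Y ω then (1:ℝ) else 0) - (if h (f (X ω)) then (1:ℝ) else 0)) ∂ν| := by
        rw [integral_sub hint1 hint2, hI1, hI2]
    _ ≤ ∫ ω, |(if Y ω then (1:ℝ) else 0) - (if h (f (X ω)) then (1:ℝ) else 0)| ∂ν := by
        simpa [Real.norm_eq_abs] using norm_integral_le_integral_norm (μ := ν)
          (fun ω => (if Y ω then (1:ℝ) else 0) - (if h (f (X ω)) then (1:ℝ) else 0))
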